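/- Let r ∈ ℤ_{≥0}, α_0 ∈ ℂ, λ_0, α_1 ∈ ℂ*, and let V be an infinite-dimensional irreducible L̄_r-module. For s ∈ ℤ_{≥0} let W_s ⊆ ℂ[X_0,X_1] be the subspace spanned by { f(X_0)(X_0+X_1)^n : n ∈ ℤ_{≥0}, f ∈ ℂ[X_0], deg f ≤ s }. Then V ⊗ W_0 ⊂ V ⊗ W_1 ⊂ ⋯ ⊂ V ⊗ W_s ⊂ ⋯ is a chain of submodules of M(V,Ω(λ_0,α_0)) ⊗ Ω(λ_0,α_1), and for each s ≥ 1 the quotient (V ⊗ W_s)/(V ⊗ W_{s−1}), equipped with the operators induced by the L_k, is isomorphic as a Virasoro module to M(V,Ω(λ_0, s+α_0+α_1)): there is a linear bijection from the quotient onto V ⊗ ℂ[X] commuting with the respective operators L_k for all k ∈ ℤ. -/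

import Mathlib

open TensorProduct

/-- Substitution `X_i ↦ X_i - k` (in the variable `i` only) on `ℂ[X_0,…,X_{N-1}]`. -/
noncomputable def shiftVar {N : ℕ} (i : Fin N) (k : ℂ) :
    MvPolynomial (Fin N) ℂ →ₗ[ℂ] MvPolynomial (Fin N) ℂ :=
  (MvPolynomial.aeval fun j =>
    MvPolynomial.X j - if j = i then MvPolynomial.C k else 0).toLinearMap

/-- The operator `L_k` on `⊗_i Ω(λ_i,α_i) = ℂ[X_0,…,X_{N-1}]`. -/
noncomputable def omegaOp {N : ℕ} (lam al : Fin N → ℂ) (k : ℤ) :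
    MvPolynomial (Fin N) ℂ →ₗ[ℂ] MvPolynomial (Fin N) ℂ :=
  ∑ i : Fin N, (lam i ^ k) •
    ((LinearMap.mulLeft ℂ (MvPolynomial.X i - MvPolynomial.C ((k : ℂ) * al i))).comp
      (shiftVar i (k : ℂ)))

/-- The operator `L_k` on `M(V,Ω(λ_0,α_0)) ⊗ ⊗_{i=1}^m Ω(λ_i,α_i) = V ⊗ ℂ[X_0,…,X_m]`. -/
noncomputable def MOp {V : Type*} [AddCommGroup V] [Module ℂ V]
    (B : ℕ → V →ₗ[ℂ] V) (r : ℕ) {m : ℕ} (lam al : Fin (m + 1) → ℂ) (k : ℤ) :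
    V ⊗[ℂ] MvPolynomial (Fin (m + 1)) ℂ →ₗ[ℂ] V ⊗[ℂ] MvPolynomial (Fin (m + 1)) ℂ :=
  TensorProduct.map LinearMap.id (omegaOp lam al k) +
  ∑ j ∈ Finset.range (r + 1),
    (((k : ℂ) ^ (j + 1)) / ((j + 1).factorial : ℂ)) •
      TensorProduct.map (B j) ((lam 0 ^ k) • shiftVar 0 (k : ℂ))

/-- Substitution `X ↦ X - k` on `ℂ[X]`. -/
noncomputable def shiftP (k : ℂ) : Polynomial ℂ →ₗ[ℂ] Polynomial ℂ :=
  (Polynomial.aeval (Polynomial.X - Polynomial.C k)).toLinearMap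

/-- The operator `L_k` on `Ω(λ,α) = ℂ[X]`. -/
noncomputable def omegaL (lam al : ℂ) (k : ℤ) : Polynomial ℂ →ₗ[ℂ] Polynomial ℂ :=
  (lam ^ k) •
    ((LinearMap.mulLeft ℂ (Polynomial.X - Polynomial.C ((k : ℂ) * al))).comp (shiftP (k : ℂ)))

/-- The operator `L_k` on the Virasoro module `M(V,Ω(λ,α)) = V ⊗ ℂ[X]`. -/
noncomputable def M1Op {V : Type*} [AddCommGroup V] [Module ℂ V]
    (B : ℕ → V →ₗ[ℂ] V) (r : ℕ) (lam al : ℂ) (k : ℤ) :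
    V ⊗[ℂ] Polynomial ℂ →ₗ[ℂ] V ⊗[ℂ] Polynomial ℂ :=
  TensorProduct.map LinearMap.id (omegaL lam al k) +
  ∑ j ∈ Finset.range (r + 1),
    (((k : ℂ) ^ (j + 1)) / ((j + 1).factorial : ℂ)) •
      TensorProduct.map (B j) ((lam ^ k) • shiftP (k : ℂ))

/-- The subspace `W_s ⊆ ℂ[X_0,X_1]` spanned by
`{ f(X_0)(X_0+X_1)^n : n ∈ ℤ_{≥0}, deg f ≤ s }`. -/
noncomputable def Wsub (s : ℕ) : Submodule ℂ (MvPolynomial (Fin 2) ℂ) :=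
  Submodule.span ℂ {p | ∃ (n : ℕ) (f : Polynomial ℂ), f.natDegree ≤ s ∧
    p = (Polynomial.aeval (MvPolynomial.X 0 : MvPolynomial (Fin 2) ℂ) f) *
        (MvPolynomial.X 0 + MvPolynomial.X 1) ^ n}

/-- The subspace `V ⊗ Q` of `V ⊗ ℂ[X_0,X_1]` for a subspace `Q ⊆ ℂ[X_0,X_1]`. -/
noncomputable def tsub (V : Type*) [AddCommGroup V] [Module ℂ V]
    (Q : Submodule ℂ (MvPolynomial (Fin 2) ℂ)) :
    Submodule ℂ (V ⊗[ℂ] MvPolynomial (Fin 2) ℂ) :=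
  Submodule.span ℂ {x | ∃ (v : V) (w : MvPolynomial (Fin 2) ℂ), w ∈ Q ∧ x = v ⊗ₜ[ℂ] w}

/-! ### Auxiliary material -/

open Polynomial

lemma shiftP_eq_taylor (k : ℂ) (f : Polynomial ℂ) : shiftP k f = Polynomial.taylor (-k) f := by
  rw [shiftP, taylor_apply, comp_eq_aeval, AlgHom.toLinearMap_apply, map_neg, sub_eq_add_neg]

lemma coeffA (k : ℂ) (f : Polynomial ℂ) (m : ℕ) (h : f.natDegree ≤ m) :
    (shiftP k f).coeff m = f.coeff m := by
  rw [shiftP_eq_taylor, taylor_coeff]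
  have h1 : (Polynomial.hasseDeriv m f).natDegree ≤ 0 := by
    refine le_trans (Polynomial.natDegree_hasseDeriv_le f m) ?_
    omega
  rw [Polynomial.eq_C_of_natDegree_le_zero h1, eval_C, Polynomial.hasseDeriv_coeff,
    zero_add, Nat.choose_self]
  simp

lemma coeffB (k : ℂ) (f : Polynomial ℂ) (s : ℕ) (h : f.natDegree ≤ s + 1) :
    (shiftP k f).coeff s = f.coeff s - ((s : ℂ) + 1) * k * f.coeff (s + 1) := by
  rw [shiftP_eq_taylor, taylor_coeff]
  have h1 : (Polynomial.hasseDeriv s f).natDegree ≤ 1 := by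
    refine le_trans (Polynomial.natDegree_hasseDeriv_le f s) ?_
    omega
  rw [Polynomial.eq_X_add_C_of_natDegree_le_one h1]
  simp only [eval_add, eval_mul, eval_C, eval_X, Polynomial.hasseDeriv_coeff]
  rw [zero_add, Nat.choose_self, add_comm 1 s, Nat.choose_succ_self_right]
  push_cast
  ring

lemma natDegree_shiftP_le (k : ℂ) (f : Polynomial ℂ) :
    (shiftP k f).natDegree ≤ f.natDegree := by
  rw [shiftP_eq_taylor, Polynomial.natDegree_taylor]

noncomputable def Fh : Polynomial ℂ →ₐ[ℂ] MvPolynomial (Fin 2) ℂ :=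
  Polynomial.aeval (MvPolynomial.X 0)

noncomputable def Gh : Polynomial ℂ →ₐ[ℂ] MvPolynomial (Fin 2) ℂ :=
  Polynomial.aeval (MvPolynomial.X 0 + MvPolynomial.X 1)

noncomputable def Eh : MvPolynomial (Fin 2) ℂ →ₐ[ℂ] Polynomial (Polynomial ℂ) :=
  MvPolynomial.aeval ![Polynomial.X, Polynomial.C Polynomial.X - Polynomial.X]

noncomputable def phi (s : ℕ) : MvPolynomial (Fin 2) ℂ →ₗ[ℂ] Polynomial ℂ where
  toFun p := (Eh p).coeff (s + 1)
  map_add' p q := by simp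
  map_smul' c p := by simp [Polynomial.coeff_smul]

lemma phi_apply (s : ℕ) (p : MvPolynomial (Fin 2) ℂ) : phi s p = (Eh p).coeff (s + 1) := rfl

lemma Eh_Gh (q : Polynomial ℂ) : Eh (Gh q) = Polynomial.C q := by
  rw [Gh, ← Polynomial.aeval_algHom_apply]
  have h1 : Eh (MvPolynomial.X 0 + MvPolynomial.X 1) =
      algebraMap (Polynomial ℂ) (Polynomial (Polynomial ℂ)) Polynomial.X := by
    simp [Eh, Polynomial.algebraMap_apply]
  rw [h1, Polynomial.aeval_algebraMap_apply, Polynomial.aeval_X_left_apply,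
    Polynomial.algebraMap_apply]
  simp

lemma Eh_Fh (f : Polynomial ℂ) :
    Eh (Fh f) = f.map (algebraMap ℂ (Polynomial ℂ)) := by
  rw [Fh, ← Polynomial.aeval_algHom_apply]
  have h1 : Eh (MvPolynomial.X 0) = Polynomial.X := by simp [Eh]
  rw [h1]
  induction f using Polynomial.induction_on' with
  | add p q hp hq => rw [map_add, hp, hq, Polynomial.map_add]
  | monomial n a =>
      simp [Polynomial.aeval_monomial, Polynomial.map_monomial,
        ← Polynomial.C_mul_X_pow_eq_monomial, Polynomial.algebraMap_apply]

lemma phi_FG (s : ℕ) (f q : Polynomial ℂ) : phi s (Fh f * Gh q) = f.coeff (s + 1) • q := by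
  rw [phi_apply, map_mul, Eh_Gh, Eh_Fh, Polynomial.coeff_mul_C, Polynomial.coeff_map]
  rw [Polynomial.algebraMap_apply, Polynomial.smul_eq_C_mul]
  simp [mul_comm]

lemma Fh_X : Fh Polynomial.X = MvPolynomial.X 0 := by simp [Fh]
lemma Gh_X : Gh Polynomial.X = MvPolynomial.X 0 + MvPolynomial.X 1 := by simp [Gh]
lemma Fh_C (a : ℂ) : Fh (Polynomial.C a) = MvPolynomial.C a := by
  simp [Fh, MvPolynomial.algebraMap_eq]

lemma sv0 (k : ℂ) (f q : Polynomial ℂ) :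
    shiftVar (0 : Fin 2) k (Fh f * Gh q) = Fh (shiftP k f) * Gh (shiftP k q) := by
  rw [shiftVar, AlgHom.toLinearMap_apply, map_mul]
  congr 1
  · rw [Fh, ← Polynomial.aeval_algHom_apply, shiftP, AlgHom.toLinearMap_apply,
      ← Polynomial.aeval_algHom_apply]
    congr 1
    simp [Fh]
  · rw [Gh, ← Polynomial.aeval_algHom_apply, shiftP, AlgHom.toLinearMap_apply,
      ← Polynomial.aeval_algHom_apply]
    congr 1
    simp [Gh]
    ring_nf

lemma sv1 (k : ℂ) (f q : Polynomial ℂ) :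
    shiftVar (1 : Fin 2) k (Fh f * Gh q) = Fh f * Gh (shiftP k q) := by
  rw [shiftVar, AlgHom.toLinearMap_apply, map_mul]
  congr 1
  · rw [Fh, ← Polynomial.aeval_algHom_apply]
    congr 1
    simp [Fh]
  · rw [Gh, ← Polynomial.aeval_algHom_apply, shiftP, AlgHom.toLinearMap_apply,
      ← Polynomial.aeval_algHom_apply]
    congr 1
    simp [Gh]
    ring_nf

lemma mem_Wsub (s : ℕ) (f q : Polynomial ℂ) (hf : f.natDegree ≤ s) :
    Fh f * Gh q ∈ Wsub s := by
  induction q using Polynomial.induction_on' with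
  | add p q hp hq => rw [map_add, mul_add]; exact add_mem hp hq
  | monomial n a =>
      have h1 : Gh (Polynomial.monomial n a) =
          a • (MvPolynomial.X 0 + MvPolynomial.X 1) ^ n := by
        rw [← Polynomial.C_mul_X_pow_eq_monomial, map_mul, map_pow, Gh_X,
          MvPolynomial.smul_eq_C_mul]
        congr 1
        simp [Gh, MvPolynomial.algebraMap_eq]
      rw [h1, mul_smul_comm]
      exact Submodule.smul_mem _ _ (Submodule.subset_span ⟨n, f, hf, rfl⟩)

lemma Wsub_le (s : ℕ) (P : Submodule ℂ (MvPolynomial (Fin 2) ℂ))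
    (h : ∀ f n, f.natDegree ≤ s → Fh f * Gh (Polynomial.X ^ n) ∈ P) : Wsub s ≤ P := by
  rw [Wsub, Submodule.span_le]
  rintro p ⟨n, f, hf, rfl⟩
  have := h f n hf
  rwa [map_pow, Gh_X] at this

lemma MC (lam0 al0 al1 : ℂ) (k : ℤ) (f q : Polynomial ℂ) :
    omegaOp (fun _ => lam0) ![al0, al1] k (Fh f * Gh q) =
      lam0 ^ k • (Fh (Polynomial.X * shiftP (k : ℂ) f
            - Polynomial.C ((k : ℂ) * al0) * shiftP (k : ℂ) f
            - Polynomial.X * f - Polynomial.C ((k : ℂ) * al1) * f) * Gh (shiftP (k : ℂ) q)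
        + Fh f * Gh (Polynomial.X * shiftP (k : ℂ) q)) := by
  rw [omegaOp, Fin.sum_univ_two]
  simp only [LinearMap.add_apply, LinearMap.smul_apply, LinearMap.comp_apply,
    LinearMap.mulLeft_apply, Matrix.cons_val_zero, Matrix.cons_val_one, Matrix.head_cons]
  rw [sv0, sv1, ← smul_add]
  simp only [map_sub, map_mul, Fh_X, Gh_X, Fh_C, MvPolynomial.C_mul]
  refine congrArg (lam0 ^ k • ·) ?_
  ring

lemma ND1 (k al0 al1 : ℂ) (s : ℕ) (f : Polynomial ℂ) (hf : f.natDegree ≤ s) :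
    (Polynomial.X * shiftP k f - Polynomial.C (k * al0) * shiftP k f
      - Polynomial.X * f - Polynomial.C (k * al1) * f).natDegree ≤ s := by
  rw [Polynomial.natDegree_le_iff_coeff_eq_zero]
  intro m hm
  obtain ⟨n, rfl⟩ : ∃ n, m = n + 1 := ⟨m - 1, by omega⟩
  have hA2 := coeffA k f n (by omega)
  have hA := coeffA k f (n + 1) (by omega)
  have hz : f.coeff (n + 1) = 0 := Polynomial.coeff_eq_zero_of_natDegree_lt (by omega)
  simp only [Polynomial.coeff_sub, Polynomial.coeff_C_mul, Polynomial.coeff_X_mul]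
  rw [hA, hA2, hz]
  ring

lemma ND2 (s : ℕ) (f : Polynomial ℂ) (hf : f.natDegree ≤ s + 1) :
    (f - Polynomial.C (f.coeff (s + 1)) * Polynomial.X ^ (s + 1)).natDegree ≤ s := by
  rw [Polynomial.natDegree_le_iff_coeff_eq_zero]
  intro m hm
  simp only [Polynomial.coeff_sub, Polynomial.coeff_C_mul, Polynomial.coeff_X_pow]
  rcases eq_or_ne m (s + 1) with rfl | hne
  · simp
  · rw [Polynomial.coeff_eq_zero_of_natDegree_lt (by omega), if_neg hne]
    simp

lemma omega_mem (lam0 al0 al1 : ℂ) (k : ℤ) (s : ℕ) :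
    Wsub s ≤ (Wsub s).comap (omegaOp (fun _ => lam0) ![al0, al1] k) := by
  refine Wsub_le s _ fun f n hf => ?_
  simp only [Submodule.mem_comap]
  rw [MC]
  exact Submodule.smul_mem _ _ (add_mem
    (mem_Wsub s _ _ (ND1 (k : ℂ) al0 al1 s f hf)) (mem_Wsub s _ _ hf))

lemma shift0_mem (k : ℂ) (s : ℕ) :
    Wsub s ≤ (Wsub s).comap (shiftVar (0 : Fin 2) k) := by
  refine Wsub_le s _ fun f n hf => ?_
  simp only [Submodule.mem_comap]
  rw [sv0]
  exact mem_Wsub s _ _ (le_trans (natDegree_shiftP_le k f) hf)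

lemma Wker (s : ℕ) : Wsub s ≤ LinearMap.ker (phi s) := by
  refine Wsub_le s _ fun f n hf => ?_
  rw [LinearMap.mem_ker, phi_FG, Polynomial.coeff_eq_zero_of_natDegree_lt (by omega), zero_smul]

noncomputable def mus (s : ℕ) : Polynomial ℂ →ₗ[ℂ] MvPolynomial (Fin 2) ℂ :=
  (LinearMap.mulLeft ℂ (Fh (Polynomial.X ^ (s + 1)))).comp Gh.toLinearMap

lemma mus_apply (s : ℕ) (p : Polynomial ℂ) :
    mus s p = Fh (Polynomial.X ^ (s + 1)) * Gh p := rfl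

lemma phi_mus (s : ℕ) (p : Polynomial ℂ) : phi s (mus s p) = p := by
  rw [mus_apply, phi_FG, Polynomial.coeff_X_pow]
  simp

lemma KW (s : ℕ) :
    Wsub (s + 1) ≤ (Wsub s).comap (LinearMap.id - (mus s) ∘ₗ (phi s)) := by
  refine Wsub_le _ _ fun f n hf => ?_
  simp only [Submodule.mem_comap, LinearMap.sub_apply, LinearMap.id_apply,
    LinearMap.comp_apply]
  rw [phi_FG, map_smul]
  have heq : Fh f * Gh (Polynomial.X ^ n) - f.coeff (s + 1) • (mus s (Polynomial.X ^ n)) =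
      Fh (f - Polynomial.C (f.coeff (s + 1)) * Polynomial.X ^ (s + 1)) *
        Gh (Polynomial.X ^ n) := by
    rw [mus_apply, MvPolynomial.smul_eq_C_mul, map_sub, map_mul, Fh_C, sub_mul]
    ring
  rw [heq]
  exact mem_Wsub s _ _ (ND2 s f hf)

lemma P1g (s : ℕ) (k : ℂ) (f q : Polynomial ℂ) (hf : f.natDegree ≤ s + 1) :
    phi s (shiftVar (0 : Fin 2) k (Fh f * Gh q)) = shiftP k (phi s (Fh f * Gh q)) := by
  rw [sv0, phi_FG, phi_FG, map_smul, coeffA k f (s + 1) hf]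

lemma P2g (lam0 al0 al1 : ℂ) (k : ℤ) (s : ℕ) (f q : Polynomial ℂ)
    (hf : f.natDegree ≤ s + 1) :
    phi s (omegaOp (fun _ => lam0) ![al0, al1] k (Fh f * Gh q)) =
      omegaL lam0 (((s : ℂ) + 1) + al0 + al1) k (phi s (Fh f * Gh q)) := by
  rw [MC, map_smul, map_add, phi_FG, phi_FG, phi_FG]
  have hg : (Polynomial.X * shiftP (k : ℂ) f - Polynomial.C ((k : ℂ) * al0) * shiftP (k : ℂ) f
      - Polynomial.X * f - Polynomial.C ((k : ℂ) * al1) * f).coeff (s + 1) =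
      -((((s : ℂ) + 1) + al0 + al1) * (k : ℂ)) * f.coeff (s + 1) := by
    simp only [Polynomial.coeff_sub, Polynomial.coeff_C_mul, Polynomial.coeff_X_mul]
    rw [coeffB (k : ℂ) f s hf, coeffA (k : ℂ) f (s + 1) hf]
    ring
  rw [hg, omegaL]
  simp only [LinearMap.smul_apply, LinearMap.comp_apply, LinearMap.mulLeft_apply]
  rw [map_smul]
  congr 1
  simp only [Polynomial.smul_eq_C_mul, map_mul, map_add, map_neg, Polynomial.C_mul,
    Polynomial.C_add, Polynomial.C_neg, Polynomial.C_1, sub_mul]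
  ring

lemma tsub_le_iff {V : Type*} [AddCommGroup V] [Module ℂ V]
    (Q : Submodule ℂ (MvPolynomial (Fin 2) ℂ))
    (P : Submodule ℂ (V ⊗[ℂ] MvPolynomial (Fin 2) ℂ))
    (h : ∀ v w, w ∈ Q → v ⊗ₜ[ℂ] w ∈ P) : tsub V Q ≤ P := by
  rw [tsub, Submodule.span_le]
  rintro x ⟨v, w, hw, rfl⟩
  exact h v w hw

lemma tmul_mem_tsub {V : Type*} [AddCommGroup V] [Module ℂ V]
    (Q : Submodule ℂ (MvPolynomial (Fin 2) ℂ)) (v : V)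
    (w : MvPolynomial (Fin 2) ℂ) (hw : w ∈ Q) : v ⊗ₜ[ℂ] w ∈ tsub V Q :=
  Submodule.subset_span ⟨v, w, hw, rfl⟩

lemma MOp_tmul {V : Type*} [AddCommGroup V] [Module ℂ V] (B : ℕ → V →ₗ[ℂ] V) (r : ℕ)
    (lam al : Fin 2 → ℂ) (k : ℤ) (v : V) (w : MvPolynomial (Fin 2) ℂ) :
    MOp B r lam al k (v ⊗ₜ[ℂ] w) = v ⊗ₜ[ℂ] (omegaOp lam al k w) +
      ∑ j ∈ Finset.range (r + 1), (((k : ℂ) ^ (j + 1)) / ((j + 1).factorial : ℂ)) •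
        ((B j v) ⊗ₜ[ℂ] ((lam 0 ^ k) • shiftVar 0 (k : ℂ) w)) := by
  simp [MOp, TensorProduct.map_tmul]

lemma M1Op_tmul {V : Type*} [AddCommGroup V] [Module ℂ V] (B : ℕ → V →ₗ[ℂ] V) (r : ℕ)
    (lam al : ℂ) (k : ℤ) (v : V) (p : Polynomial ℂ) :
    M1Op B r lam al k (v ⊗ₜ[ℂ] p) = v ⊗ₜ[ℂ] (omegaL lam al k p) +
      ∑ j ∈ Finset.range (r + 1), (((k : ℂ) ^ (j + 1)) / ((j + 1).factorial : ℂ)) •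
        ((B j v) ⊗ₜ[ℂ] ((lam ^ k) • shiftP (k : ℂ) p)) := by
  simp [M1Op, TensorProduct.map_tmul]

lemma MOp_mem {V : Type*} [AddCommGroup V] [Module ℂ V] (B : ℕ → V →ₗ[ℂ] V) (r : ℕ)
    (lam0 al0 al1 : ℂ) (k : ℤ) (s : ℕ) :
    tsub V (Wsub s) ≤ (tsub V (Wsub s)).comap (MOp B r (fun _ => lam0) ![al0, al1] k) := by
  refine tsub_le_iff _ _ fun v w hw => ?_
  simp only [Submodule.mem_comap]
  rw [MOp_tmul]
  refine add_mem (tmul_mem_tsub _ _ _ (Submodule.mem_comap.mp (omega_mem lam0 al0 al1 k s hw)))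
    (Submodule.sum_mem _ fun j _ => Submodule.smul_mem _ _
      (tmul_mem_tsub _ _ _ (Submodule.smul_mem _ _
        (Submodule.mem_comap.mp (shift0_mem (k : ℂ) s hw)))))

lemma Ktens {V : Type*} [AddCommGroup V] [Module ℂ V] (s : ℕ) :
    tsub V (Wsub (s + 1)) ≤ (tsub V (Wsub s)).comap
      ((LinearMap.id : V ⊗[ℂ] MvPolynomial (Fin 2) ℂ →ₗ[ℂ] _) -
        (TensorProduct.map LinearMap.id (mus s)) ∘ₗ
          (TensorProduct.map LinearMap.id (phi s))) := by
  refine tsub_le_iff _ _ fun v w hw => ?_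
  simp only [Submodule.mem_comap, LinearMap.sub_apply, LinearMap.id_apply,
    LinearMap.comp_apply, TensorProduct.map_tmul]
  rw [← TensorProduct.tmul_sub]
  exact tmul_mem_tsub _ v _ (Submodule.mem_comap.mp (KW s hw))

lemma Intw {V : Type*} [AddCommGroup V] [Module ℂ V] (B : ℕ → V →ₗ[ℂ] V) (r : ℕ)
    (lam0 al0 al1 : ℂ) (s : ℕ) (k : ℤ) :
    tsub V (Wsub (s + 1)) ≤ LinearMap.ker
      ((TensorProduct.map LinearMap.id (phi s)) ∘ₗ MOp B r (fun _ => lam0) ![al0, al1] k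
        - (M1Op B r lam0 (((s : ℂ) + 1) + al0 + al1) k) ∘ₗ
          (TensorProduct.map LinearMap.id (phi s))) := by
  refine tsub_le_iff _ _ fun v w hw => ?_
  have hWle : Wsub (s + 1) ≤ LinearMap.ker
      (((TensorProduct.map LinearMap.id (phi s)) ∘ₗ MOp B r (fun _ => lam0) ![al0, al1] k
        - (M1Op B r lam0 (((s : ℂ) + 1) + al0 + al1) k) ∘ₗ
          (TensorProduct.map LinearMap.id (phi s))) ∘ₗ
        (TensorProduct.mk ℂ V (MvPolynomial (Fin 2) ℂ) v)) := by
    refine Wsub_le _ _ fun f n hf => ?_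
    simp only [LinearMap.mem_ker, LinearMap.comp_apply, TensorProduct.mk_apply,
      LinearMap.sub_apply]
    rw [MOp_tmul]
    simp only [map_add, map_sum, map_smul, TensorProduct.map_tmul, LinearMap.id_apply]
    rw [M1Op_tmul]
    simp only [map_smul, TensorProduct.tmul_smul]
    simp only [P1g s (k : ℂ) f (Polynomial.X ^ n) hf, P2g lam0 al0 al1 k s f _ hf]
    exact sub_self _
  exact hWle hw

/-- **Corollary 3.4.** Let `r ∈ ℤ_{≥0}`, `α_0 ∈ ℂ`, `λ_0, α_1 ∈ ℂ*`, and `V` an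
infinite-dimensional irreducible `L̄_r`-module. Then
`V ⊗ W_0 ⊂ V ⊗ W_1 ⊂ ⋯` is a chain of submodules of `M(V,Ω(λ_0,α_0)) ⊗ Ω(λ_0,α_1)`,
and for each `s ≥ 1` (written here as `s + 1` with `s ∈ ℤ_{≥0}`) the quotient
`(V ⊗ W_{s+1})/(V ⊗ W_s)` is isomorphic to `M(V,Ω(λ_0, (s+1)+α_0+α_1))`.
The quotient isomorphism is expressed, via the first isomorphism theorem, as a
surjective linear map `ψ : V ⊗ W_{s+1} → M(V,Ω(λ_0,(s+1)+α_0+α_1))` whose kernel is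
exactly `V ⊗ W_s` and which intertwines the operators `L_k`. -/
theorem statement5 {V : Type*} [AddCommGroup V] [Module ℂ V]
    (r : ℕ) (al0 : ℂ) (lam0 al1 : ℂ) (hlam0 : lam0 ≠ 0) (hal1 : al1 ≠ 0)
    (B : ℕ → V →ₗ[ℂ] V)
    (hBtop : ∀ i, r < i → B i = 0)
    (hBrel : ∀ i j, i ≤ r → j ≤ r →
      B i ∘ₗ B j - B j ∘ₗ B i = (((j : ℂ) - (i : ℂ)) • B (i + j) : V →ₗ[ℂ] V))
    (hVirr : ∀ U : Submodule ℂ V, (∀ i, i ≤ r → ∀ w ∈ U, B i w ∈ U) → U = ⊥ ∨ U = ⊤)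
    (hVinf : ¬ Module.Finite ℂ V) :
    (∀ s : ℕ, ∀ k : ℤ, ∀ x ∈ tsub V (Wsub s),
        MOp B r (fun _ => lam0) ![al0, al1] k x ∈ tsub V (Wsub s)) ∧
    (∀ s : ℕ, tsub V (Wsub s) < tsub V (Wsub (s + 1))) ∧
    (∀ s : ℕ,
      ∃ ψ : ↥(tsub V (Wsub (s + 1))) →ₗ[ℂ] (V ⊗[ℂ] Polynomial ℂ),
        Function.Surjective ψ ∧
        LinearMap.ker ψ = (tsub V (Wsub s)).comap (tsub V (Wsub (s + 1))).subtype ∧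
        ∀ (k : ℤ) (x : V ⊗[ℂ] MvPolynomial (Fin 2) ℂ)
          (hx : x ∈ tsub V (Wsub (s + 1)))
          (hLx : MOp B r (fun _ => lam0) ![al0, al1] k x ∈ tsub V (Wsub (s + 1))),
          ψ ⟨MOp B r (fun _ => lam0) ![al0, al1] k x, hLx⟩ =
            M1Op B r lam0 (((s : ℂ) + 1) + al0 + al1) k (ψ ⟨x, hx⟩)) := by
  obtain ⟨v0, hv0⟩ : ∃ v : V, v ≠ 0 := by
    by_contra h
    push_neg at h
    exact hVinf (Module.Finite.of_surjective (0 : ℂ →ₗ[ℂ] V)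
      (fun v => ⟨0, by rw [LinearMap.zero_apply, h v]⟩))
  have hT0 : ∀ s : ℕ, ∀ x ∈ tsub V (Wsub s),
      TensorProduct.map (LinearMap.id : V →ₗ[ℂ] V) (phi s) x = 0 := by
    intro s x hx
    refine tsub_le_iff (Wsub s)
      (LinearMap.ker (TensorProduct.map (LinearMap.id : V →ₗ[ℂ] V) (phi s)))
      (fun v w hw => ?_) hx
    simp only [LinearMap.mem_ker, TensorProduct.map_tmul, LinearMap.id_apply]
    rw [LinearMap.mem_ker.mp (Wker s hw), TensorProduct.tmul_zero]
  refine ⟨?_, ?_, ?_⟩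
  · -- submodule chain
    intro s k x hx
    exact Submodule.mem_comap.mp (MOp_mem B r lam0 al0 al1 k s hx)
  · -- strictness
    intro s
    rw [SetLike.lt_iff_le_and_exists]
    constructor
    · refine tsub_le_iff _ _ fun v w hw => tmul_mem_tsub _ v w ?_
      refine Wsub_le s _ (fun f n hf => mem_Wsub (s + 1) f _ (le_trans hf (Nat.le_succ s))) hw
    · refine ⟨v0 ⊗ₜ[ℂ] (Fh (Polynomial.X ^ (s + 1)) * Gh 1), ?_, ?_⟩
      · exact tmul_mem_tsub _ _ _ (mem_Wsub (s + 1) _ _ (by simp))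
      · intro hmem
        set ℓ : MvPolynomial (Fin 2) ℂ →ₗ[ℂ] ℂ := (Polynomial.lcoeff ℂ 0) ∘ₗ phi s with hℓ
        set Ψ : V ⊗[ℂ] MvPolynomial (Fin 2) ℂ →ₗ[ℂ] V :=
          (TensorProduct.rid ℂ V).toLinearMap ∘ₗ TensorProduct.map LinearMap.id ℓ with hΨ
        have hΨ0 : Ψ (v0 ⊗ₜ[ℂ] (Fh (Polynomial.X ^ (s + 1)) * Gh 1)) = 0 := by
          refine tsub_le_iff (Wsub s) (LinearMap.ker Ψ) (fun v w hw => ?_) hmem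
          simp only [LinearMap.mem_ker, hΨ, LinearMap.comp_apply, TensorProduct.map_tmul,
            LinearMap.id_apply, hℓ]
          rw [LinearMap.mem_ker.mp (Wker s hw)]
          simp
        have hΨ1 : Ψ (v0 ⊗ₜ[ℂ] (Fh (Polynomial.X ^ (s + 1)) * Gh 1)) = v0 := by
          simp only [hΨ, LinearMap.comp_apply, TensorProduct.map_tmul, LinearMap.id_apply, hℓ]
          rw [phi_FG]
          simp [Polynomial.coeff_X_pow]
        exact hv0 (by rw [← hΨ1, hΨ0])
  · -- quotient isomorphism
    intro s
    set φT : V ⊗[ℂ] MvPolynomial (Fin 2) ℂ →ₗ[ℂ] V ⊗[ℂ] Polynomial ℂ :=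
      TensorProduct.map LinearMap.id (phi s) with hφT
    set θ : V ⊗[ℂ] Polynomial ℂ →ₗ[ℂ] V ⊗[ℂ] MvPolynomial (Fin 2) ℂ :=
      TensorProduct.map LinearMap.id (mus s) with hθ
    have hθmem : ∀ y : V ⊗[ℂ] Polynomial ℂ, θ y ∈ tsub V (Wsub (s + 1)) := by
      intro y
      induction y using TensorProduct.induction_on with
      | zero => rw [map_zero]; exact Submodule.zero_mem _
      | tmul v p =>
          rw [hθ, TensorProduct.map_tmul, LinearMap.id_apply, mus_apply]
          exact tmul_mem_tsub _ _ _ (mem_Wsub (s + 1) _ _ (by simp))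
      | add a b ha hb => rw [map_add]; exact add_mem ha hb
    have hφθ : ∀ y : V ⊗[ℂ] Polynomial ℂ, φT (θ y) = y := by
      intro y
      induction y using TensorProduct.induction_on with
      | zero => rw [map_zero, map_zero]
      | tmul v p =>
          rw [hθ, hφT, TensorProduct.map_tmul, TensorProduct.map_tmul, phi_mus]
          simp
      | add a b ha hb => rw [map_add, map_add, ha, hb]
    refine ⟨φT ∘ₗ (tsub V (Wsub (s + 1))).subtype, ?_, ?_, ?_⟩
    · intro y
      exact ⟨⟨θ y, hθmem y⟩, hφθ y⟩
    · ext x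
      simp only [LinearMap.mem_ker, LinearMap.comp_apply, Submodule.subtype_apply,
        Submodule.mem_comap]
      constructor
      · intro h0
        have hk := Submodule.mem_comap.mp (Ktens s x.2)
        simp only [LinearMap.sub_apply, LinearMap.id_apply, LinearMap.comp_apply] at hk
        rw [← hφT] at hk
        rw [h0, map_zero, sub_zero] at hk
        exact hk
      · intro hxs
        exact hT0 s _ hxs
    · intro k x hx hLx
      have h := Intw B r lam0 al0 al1 s k hx
      simp only [LinearMap.mem_ker, LinearMap.sub_apply, LinearMap.comp_apply] at h
      have h2 := sub_eq_zero.mp h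
      simpa only [LinearMap.comp_apply, Submodule.subtype_apply] using h2
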